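/- For every n ≥ 2 and any point v obtained from y_{2n} (if y_{2n} ∈ K) or from y_{2n−1} by replacing the coordinate equal to α_{2n} with another symbol occurring in the same coordinate position among the points y₁,…,y_{2n}, the set S_{2n} ∪ {v} is good; equivalently, the (2n+1)×(2n+1) matrix with rows indexed by {y₁,…,y_{2n}, v} and columns indexed by {x₄, α₁,…,α_{2n}} (entry 1 iff the symbol occurs in the point) has linearly independent rows except that the last row is not in the span of the first 2n rows. -/

import Mathlib

open scoped BigOperators

/-- Symbols: x₁,x₂,x₃,x₄ are 0,1,2,3 and αⱼ = j+3 (so all symbols are distinct naturals). -/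
def α (j : ℕ) : ℕ := j + 3

/-- The points y₁, y₂, y₃, … of the paper's construction. -/
def y : ℕ → Fin 4 → ℕ := fun k =>
  if k = 1 then ![0, 1, 2, 3]
  else if k = 2 then ![0, 1, α 1, α 2]
  else match k % 4 with
    | 1 => ![0, α (k - 1), α k, α (k + 1)]
    | 2 => ![α (k - 3), 1, α (k - 1), α k]
    | 3 => ![α k, α (k + 1), 2, α (k - 1)]
    | _ => ![α (k - 1), α k, α (k - 3), 3]

/-- u = (u₁,u₂,u₃,u₄) solves equation (1) for f on S. -/
def Solves (S : Set (Fin 4 → ℕ)) (f : (Fin 4 → ℕ) → ℂ) (u : Fin 4 → ℕ → ℂ) : Prop :=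
  ∀ p ∈ S, f p = ∑ i, u i (p i)

/-- S is good: every complex function on S decomposes into coordinate functions. -/
def IsGood (S : Set (Fin 4 → ℕ)) : Prop := ∀ f, ∃ u, Solves S f u

/-- i-th projection of S. -/
def proj (S : Set (Fin 4 → ℕ)) (i : Fin 4) : Set ℕ := (fun p => p i) '' S

/-- B is a boundary set of S: for every f and every prescription U on B,
equation (1) admits a solution agreeing with U on B, unique on the projections of S. -/
def IsBoundary (S : Set (Fin 4 → ℕ)) (B : Set ℕ) : Prop :=
  B ⊆ ⋃ i, proj S i ∧
  ∀ f : (Fin 4 → ℕ) → ℂ, ∀ U : ℕ → ℂ,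
    (∃ u, Solves S f u ∧ ∀ i, ∀ a ∈ B ∩ proj S i, u i a = U a) ∧
    ∀ u v, Solves S f u → (∀ i, ∀ a ∈ B ∩ proj S i, u i a = U a) →
      Solves S f v → (∀ i, ∀ a ∈ B ∩ proj S i, v i a = U a) →
      ∀ i, ∀ a ∈ proj S i, u i a = v i a

/-- S is full: a maximal good subset of the product of its projections. -/
def IsFull (S : Set (Fin 4 → ℕ)) : Prop :=
  IsGood S ∧ ∀ T : Set (Fin 4 → ℕ), S ⊆ T → (∀ p ∈ T, ∀ i, p i ∈ proj S i) →
    IsGood T → T = S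

/-- Sₙ = {y₁,…,y_N}. -/
def Sn (N : ℕ) : Set (Fin 4 → ℕ) := y '' Set.Icc 1 N

/-- The infinite set S = {y₁, y₂, …}. -/
def Sinf : Set (Fin 4 → ℕ) := y '' Set.Ici 1

/-- The extra point z = zₙ = (α_{4n−1}, x₂, α_{4n−3}, x₄). -/
def z (n : ℕ) : Fin 4 → ℕ := ![α (4 * n - 1), 1, α (4 * n - 3), 3]

/-- Two points of S are related iff some finite full subset of S contains both. -/
def Related (S : Set (Fin 4 → ℕ)) (p q : Fin 4 → ℕ) : Prop :=
  ∃ K, K ⊆ S ∧ K.Finite ∧ IsFull K ∧ p ∈ K ∧ q ∈ K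

/-- The 4n×4n incidence matrix A_{4n}: rows y₂,…,y_{4n},zₙ; columns α₁,…,α_{4n}. -/
def A (n : ℕ) : Matrix (Fin (4 * n)) (Fin (4 * n)) ℚ :=
  Matrix.of fun i j =>
    if ∃ k, (if (i : ℕ) = 4 * n - 1 then z n else y ((i : ℕ) + 2)) k = (j : ℕ) + 4
    then 1 else 0

lemma exists_fin4 {p : Fin 4 → Prop} : (∃ t, p t) ↔ p 0 ∨ p 1 ∨ p 2 ∨ p 3 := by
  constructor
  · rintro ⟨t, h⟩; fin_cases t <;> tauto
  · rintro (h|h|h|h) <;> exact ⟨_, h⟩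

lemma y_one : y 1 = ![0, 1, 2, 3] := rfl
lemma y_two : y 2 = ![0, 1, 4, 5] := rfl

lemma y_mod1 (k : ℕ) (h3 : 3 ≤ k) (h : k % 4 = 1) : y k = ![0, k+2, k+3, k+4] := by
  unfold y
  rw [if_neg (by omega), if_neg (by omega), h]
  have e1 : α (k-1) = k + 2 := by unfold α; omega
  have e2 : α k = k + 3 := by unfold α; omega
  have e3 : α (k+1) = k + 4 := by unfold α; omega
  rw [e1, e2, e3]
  rfl

lemma y_mod2 (k : ℕ) (h3 : 3 ≤ k) (h : k % 4 = 2) : y k = ![k, 1, k+2, k+3] := by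
  unfold y
  rw [if_neg (by omega), if_neg (by omega), h]
  have e1 : α (k-3) = k := by unfold α; omega
  have e2 : α (k-1) = k+2 := by unfold α; omega
  have e3 : α k = k + 3 := by unfold α; omega
  rw [e1, e2, e3]
  rfl

lemma y_mod3 (k : ℕ) (h3 : 3 ≤ k) (h : k % 4 = 3) : y k = ![k+3, k+4, 2, k+2] := by
  unfold y
  rw [if_neg (by omega), if_neg (by omega), h]
  have e1 : α k = k+3 := by unfold α; omega
  have e2 : α (k+1) = k+4 := by unfold α; omega
  have e3 : α (k-1) = k+2 := by unfold α; omega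
  rw [e1, e2, e3]
  rfl

lemma y_mod0 (k : ℕ) (h3 : 3 ≤ k) (h : k % 4 = 0) : y k = ![k+2, k+3, k, 3] := by
  unfold y
  rw [if_neg (by omega), if_neg (by omega), h]
  have e1 : α (k-1) = k+2 := by unfold α; omega
  have e2 : α k = k+3 := by unfold α; omega
  have e3 : α (k-3) = k := by unfold α; omega
  rw [e1, e2, e3]
  rfl

def E (n : ℕ) (c : ℕ) : Fin (2*n+1) → ℚ := fun j => if (j:ℕ) = c then 1 else 0

def Row (n : ℕ) (p : Fin 4 → ℕ) : Fin (2*n+1) → ℚ :=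
  fun j => if ∃ t, p t = (j:ℕ)+3 then 1 else 0

lemma row_of_vec (n a b c d : ℕ) :
    Row n ![a, b, c, d] = fun j : Fin (2*n+1) =>
      if a = (j:ℕ)+3 ∨ b = (j:ℕ)+3 ∨ c = (j:ℕ)+3 ∨ d = (j:ℕ)+3 then (1:ℚ) else 0 := by
  funext j
  simp only [Row, exists_fin4]
  rfl

lemma row_y1 (n : ℕ) : Row n (y 1) = E n 0 := by
  rw [y_one, row_of_vec]
  funext j
  simp only [E]
  split_ifs <;> (try norm_num) <;> (try (casesm* _ ∨ _)) <;> first | exact ‹False›.elim | omega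

lemma row_y2 (n : ℕ) : Row n (y 2) = E n 1 + E n 2 := by
  rw [y_two, row_of_vec]
  funext j
  simp only [E, Pi.add_apply]
  split_ifs <;> (try norm_num) <;> (try (casesm* _ ∨ _)) <;> first | exact ‹False›.elim | omega

lemma row_mod1 (n k : ℕ) (h3 : 3 ≤ k) (h : k % 4 = 1) :
    Row n (y k) = E n (k-1) + E n k + E n (k+1) := by
  rw [y_mod1 k h3 h, row_of_vec]
  funext j
  simp only [E, Pi.add_apply]
  split_ifs <;> (try norm_num) <;> (try (casesm* _ ∨ _)) <;> first | exact ‹False›.elim | omega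

lemma row_mod3 (n k : ℕ) (h3 : 3 ≤ k) (h : k % 4 = 3) :
    Row n (y k) = E n (k-1) + E n k + E n (k+1) := by
  rw [y_mod3 k h3 h, row_of_vec]
  funext j
  simp only [E, Pi.add_apply]
  split_ifs <;> (try norm_num) <;> (try (casesm* _ ∨ _)) <;> first | exact ‹False›.elim | omega

lemma row_mod2 (n k : ℕ) (h3 : 3 ≤ k) (h : k % 4 = 2) :
    Row n (y k) = E n (k-3) + E n (k-1) + E n k := by
  rw [y_mod2 k h3 h, row_of_vec]
  funext j
  simp only [E, Pi.add_apply]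
  split_ifs <;> (try norm_num) <;> (try (casesm* _ ∨ _)) <;> first | exact ‹False›.elim | omega

lemma row_mod0 (n k : ℕ) (h3 : 3 ≤ k) (h : k % 4 = 0) :
    Row n (y k) = E n 0 + E n (k-3) + E n (k-1) + E n k := by
  rw [y_mod0 k h3 h, row_of_vec]
  funext j
  simp only [E, Pi.add_apply]
  split_ifs <;> (try norm_num) <;> (try (casesm* _ ∨ _)) <;> first | exact ‹False›.elim | omega

def Gfam (n : ℕ) : Fin (2*n) → (Fin (2*n+1) → ℚ) := fun k => Row n (y ((k:ℕ)+1))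

def Ffam (n : ℕ) (v : Fin 4 → ℕ) : Fin (2*n+1) → (Fin (2*n+1) → ℚ) :=
  Fin.snoc (Gfam n) (Row n v)

def Sp (n : ℕ) (v : Fin 4 → ℕ) : Submodule ℚ (Fin (2*n+1) → ℚ) :=
  Submodule.span ℚ (Set.range (Ffam n v))

lemma mem_yrow (n : ℕ) (v : Fin 4 → ℕ) (k : ℕ) (h1 : 1 ≤ k) (h2 : k ≤ 2*n) :
    Row n (y k) ∈ Sp n v := by
  apply Submodule.subset_span
  refine ⟨Fin.castSucc ⟨k-1, by omega⟩, ?_⟩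
  unfold Ffam
  rw [Fin.snoc_castSucc]
  show Row n (y ((k-1)+1)) = Row n (y k)
  rw [show k-1+1 = k from by omega]

lemma mem_vrow (n : ℕ) (v : Fin 4 → ℕ) : Row n v ∈ Sp n v := by
  apply Submodule.subset_span
  refine ⟨Fin.last _, ?_⟩
  unfold Ffam
  rw [Fin.snoc_last]

lemma span_pair (n : ℕ) (hn : 2 ≤ n) (v : Fin 4 → ℕ) :
    ∀ t, 1 ≤ t → t ≤ n →
      (∀ c, c ≤ 2*t-2 → E n c ∈ Sp n v) ∧ (E n (2*t-1) + E n (2*t) ∈ Sp n v) := by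
  intro t ht
  induction t, ht using Nat.le_induction with
  | base =>
    intro _
    constructor
    · intro c hc
      have hc0 : c = 0 := by omega
      rw [hc0, ← row_y1]
      exact mem_yrow n v 1 le_rfl (by omega)
    · rw [show 2*1-1 = 1 from rfl, show 2*1 = 2 from rfl, ← row_y2]
      exact mem_yrow n v 2 (by omega) (by omega)
  | succ t ht IH =>
    intro htn
    obtain ⟨hC, hP⟩ := IH (by omega)
    have hRk : Row n (y (2*t+1)) ∈ Sp n v := mem_yrow n v _ (by omega) (by omega)
    have hRk1 : Row n (y (2*t+2)) ∈ Sp n v := mem_yrow n v _ (by omega) (by omega)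
    have hE0 : E n 0 ∈ Sp n v := hC 0 (by omega)
    have hmod : (2*t+1) % 4 = 1 ∨ (2*t+1) % 4 = 3 := by omega
    have hk3 : 3 ≤ 2*t+1 := by omega
    have hRkE : Row n (y (2*t+1)) = E n (2*t) + E n (2*t+1) + E n (2*t+2) := by
      rcases hmod with h|h
      · have e := row_mod1 n (2*t+1) hk3 h
        rwa [show 2*t+1-1 = 2*t from by omega, show 2*t+1+1 = 2*t+2 from by omega] at e
      · have e := row_mod3 n (2*t+1) hk3 h
        rwa [show 2*t+1-1 = 2*t from by omega, show 2*t+1+1 = 2*t+2 from by omega] at e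
    have hdiff : E n (2*t) - E n (2*t-1) ∈ Sp n v := by
      rcases hmod with h|h
      · have h2 : (2*t+2) % 4 = 2 := by omega
        have e := row_mod2 n (2*t+2) (by omega) h2
        rw [show 2*t+2-3 = 2*t-1 from by omega, show 2*t+2-1 = 2*t+1 from by omega] at e
        have key : E n (2*t) - E n (2*t-1) = Row n (y (2*t+1)) - Row n (y (2*t+2)) := by
          rw [hRkE, e]; abel
        rw [key]; exact sub_mem hRk hRk1
      · have h2 : (2*t+2) % 4 = 0 := by omega
        have e := row_mod0 n (2*t+2) (by omega) h2
        rw [show 2*t+2-3 = 2*t-1 from by omega, show 2*t+2-1 = 2*t+1 from by omega] at e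
        have key : E n (2*t) - E n (2*t-1)
            = Row n (y (2*t+1)) - Row n (y (2*t+2)) + E n 0 := by
          rw [hRkE, e]; abel
        rw [key]; exact add_mem (sub_mem hRk hRk1) hE0
    have hE2t : E n (2*t) ∈ Sp n v := by
      have key : E n (2*t)
          = (2⁻¹ : ℚ) • ((E n (2*t-1) + E n (2*t)) + (E n (2*t) - E n (2*t-1))) := by
        module
      rw [key]
      exact Submodule.smul_mem _ _ (add_mem hP hdiff)
    have hE2t1 : E n (2*t-1) ∈ Sp n v := by
      have key : E n (2*t-1) = (E n (2*t-1) + E n (2*t)) - E n (2*t) := by abel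
      rw [key]; exact sub_mem hP hE2t
    constructor
    · intro c hc
      rcases (by omega : c ≤ 2*t-2 ∨ c = 2*t-1 ∨ c = 2*t) with h|h|h
      · exact hC c h
      · rw [h]; exact hE2t1
      · rw [h]; exact hE2t
    · rw [show 2*(t+1)-1 = 2*t+1 from by omega, show 2*(t+1) = 2*t+2 from by omega]
      have key : E n (2*t+1) + E n (2*t+2) = Row n (y (2*t+1)) - E n (2*t) := by
        rw [hRkE]; abel
      rw [key]; exact sub_mem hRk hE2t

lemma pos1_val (n k s : ℕ) (hn : 2 ≤ n) (h4 : (2*n) % 4 = 0) (hk1 : 1 ≤ k) (hk2 : k ≤ 2*n)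
    (hs : y k 1 = s) (hne : s ≠ 2*n+3) :
    s = 1 ∨ (s % 4 = 3 ∧ 7 ≤ s ∧ s + 1 ≤ 2*n) := by
  rcases eq_or_ne k 1 with rfl|hk1'
  · rw [y_one] at hs
    have h1 : (1:ℕ) = s := hs
    omega
  rcases eq_or_ne k 2 with rfl|hk2'
  · rw [y_two] at hs
    have h1 : (1:ℕ) = s := hs
    omega
  have h3k : 3 ≤ k := by omega
  rcases (by omega : k % 4 = 1 ∨ k % 4 = 2 ∨ k % 4 = 3 ∨ k % 4 = 0) with hm|hm|hm|hm
  · rw [y_mod1 k h3k hm] at hs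
    have h1 : k + 2 = s := hs
    right; omega
  · rw [y_mod2 k h3k hm] at hs
    have h1 : (1:ℕ) = s := hs
    omega
  · rw [y_mod3 k h3k hm] at hs
    have h1 : k + 4 = s := hs
    right; omega
  · rw [y_mod0 k h3k hm] at hs
    have h1 : k + 3 = s := hs
    right; omega

lemma pos3_val (n k s : ℕ) (hn : 2 ≤ n) (h4 : (2*n) % 4 = 2) (hk1 : 1 ≤ k) (hk2 : k ≤ 2*n)
    (hs : y k 3 = s) (hne : s ≠ 2*n+3) :
    s = 3 ∨ (s % 4 = 1 ∧ 5 ≤ s ∧ s + 1 ≤ 2*n) := by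
  rcases eq_or_ne k 1 with rfl|hk1'
  · rw [y_one] at hs
    have h1 : (3:ℕ) = s := hs
    omega
  rcases eq_or_ne k 2 with rfl|hk2'
  · rw [y_two] at hs
    have h1 : (5:ℕ) = s := hs
    right; omega
  have h3k : 3 ≤ k := by omega
  rcases (by omega : k % 4 = 1 ∨ k % 4 = 2 ∨ k % 4 = 3 ∨ k % 4 = 0) with hm|hm|hm|hm
  · rw [y_mod1 k h3k hm] at hs
    have h1 : k + 4 = s := hs
    right; omega
  · rw [y_mod2 k h3k hm] at hs
    have h1 : k + 3 = s := hs
    right; omega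
  · rw [y_mod3 k h3k hm] at hs
    have h1 : k + 2 = s := hs
    right; omega
  · rw [y_mod0 k h3k hm] at hs
    have h1 : (3:ℕ) = s := hs
    omega

set_option maxHeartbeats 2000000 in
lemma sp_top (n : ℕ) (hn : 2 ≤ n) (w : Fin 4 → ℕ)
    (hw : w = y (2 * n - 1) ∨ w = y (2 * n)) (v : Fin 4 → ℕ)
    (hv : ∃ i : Fin 4, w i = α (2 * n) ∧ v i ≠ α (2 * n) ∧
      (∃ k, 1 ≤ k ∧ k ≤ 2 * n ∧ y k i = v i) ∧ ∀ j, j ≠ i → v j = w j) :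
    ⊤ ≤ Sp n v := by
  obtain ⟨hC, hP⟩ := span_pair n hn v n (by omega) le_rfl
  obtain ⟨i, hwi, hvine, ⟨k, hk1, hk2, hyk⟩, hvj⟩ := hv
  unfold α at hwi hvine
  have hE2n : E n (2*n) ∈ Sp n v := by
    rcases (by omega : (2*n) % 4 = 0 ∨ (2*n) % 4 = 2) with h4|h4
    · -- case A : the special coordinate is i = 1
      have hi1 : i = 1 ∧ v 0 = w 0 ∧ v 2 = w 2 ∧ v 3 = w 3 → True := fun _ => trivial
      rcases hw with rfl|rfl
      · -- w = y (2n-1), with (2n-1) % 4 = 3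
        have hwv : y (2*n-1) = ![2*n+2, 2*n+3, 2, 2*n+1] := by
          have e := y_mod3 (2*n-1) (by omega) (by omega)
          rwa [show 2*n-1+3 = 2*n+2 from by omega, show 2*n-1+4 = 2*n+3 from by omega,
            show 2*n-1+2 = 2*n+1 from by omega] at e
        rw [hwv] at hwi hvj
        have hi : i = 1 := by
          fin_cases i
          · exact absurd (show 2*n+2 = 2*n+3 from hwi) (by omega)
          · rfl
          · exact absurd (show (2:ℕ) = 2*n+3 from hwi) (by omega)
          · exact absurd (show 2*n+1 = 2*n+3 from hwi) (by omega)
        subst hi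
        have hv0 : v 0 = 2*n+2 := hvj 0 (by decide)
        have hv2 : v 2 = 2 := hvj 2 (by decide)
        have hv3 : v 3 = 2*n+1 := hvj 3 (by decide)
        have hsf := pos1_val n k (v 1) hn h4 hk1 hk2 hyk hvine
        have hroww : Row n (y (2*n-1)) = E n (2*n-2) + E n (2*n-1) + E n (2*n) := by
          have e := row_mod3 n (2*n-1) (by omega) (by omega)
          rwa [show 2*n-1-1 = 2*n-2 from by omega, show 2*n-1+1 = 2*n from by omega] at e
        have hrowv : Row n v = E n (2*n-2) + E n (2*n-1)
            + (fun j : Fin (2*n+1) => if 3 ≤ v 1 ∧ (j:ℕ) = v 1 - 3 then (1:ℚ) else 0) := by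
          clear hC hP hroww hwi hvine hyk hk1 hk2
          funext j
          have hj : (j:ℕ) < 2*n+1 := j.isLt
          simp only [Row, exists_fin4, hv0, hv2, hv3, E, Pi.add_apply]
          split_ifs <;> (try norm_num) <;> (try (casesm* _ ∨ _)) <;> first | exact ‹False›.elim | omega
        have hD : (fun j : Fin (2*n+1) => if 3 ≤ v 1 ∧ (j:ℕ) = v 1 - 3 then (1:ℚ) else 0)
            ∈ Sp n v := by
          rcases hsf with h|h
          · have e : (fun j : Fin (2*n+1) => if 3 ≤ v 1 ∧ (j:ℕ) = v 1 - 3 then (1:ℚ) else 0)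
                = 0 := by
              funext j; rw [if_neg (by omega)]; rfl
            rw [e]; exact zero_mem _
          · have e : (fun j : Fin (2*n+1) => if 3 ≤ v 1 ∧ (j:ℕ) = v 1 - 3 then (1:ℚ) else 0)
                = E n (v 1 - 3) := by
              funext j; simp only [E]; split_ifs <;> (try rfl) <;> omega
            rw [e]; exact hC (v 1 - 3) (by omega)
        have hkey : E n (2*n) = Row n (y (2*n-1)) - Row n v
            + (fun j : Fin (2*n+1) => if 3 ≤ v 1 ∧ (j:ℕ) = v 1 - 3 then (1:ℚ) else 0) := by
          rw [hroww, hrowv]; abel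
        rw [hkey]
        exact add_mem (sub_mem (mem_yrow n v (2*n-1) (by omega) (by omega)) (mem_vrow n v)) hD
      · -- w = y (2n), with (2n) % 4 = 0
        have hwv : y (2*n) = ![2*n+2, 2*n+3, 2*n, 3] := y_mod0 (2*n) (by omega) h4
        rw [hwv] at hwi hvj
        have hi : i = 1 := by
          fin_cases i
          · exact absurd (show 2*n+2 = 2*n+3 from hwi) (by omega)
          · rfl
          · exact absurd (show 2*n = 2*n+3 from hwi) (by omega)
          · exact absurd (show (3:ℕ) = 2*n+3 from hwi) (by omega)
        subst hi
        have hv0 : v 0 = 2*n+2 := hvj 0 (by decide)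
        have hv2 : v 2 = 2*n := hvj 2 (by decide)
        have hv3 : v 3 = 3 := hvj 3 (by decide)
        have hsf := pos1_val n k (v 1) hn h4 hk1 hk2 hyk hvine
        have hroww : Row n (y (2*n)) = E n 0 + E n (2*n-3) + E n (2*n-1) + E n (2*n) := by
          have e := row_mod0 n (2*n) (by omega) h4
          rwa [show 2*n-1 = 2*n-1 from rfl] at e
        have hrowv : Row n v = E n 0 + E n (2*n-3) + E n (2*n-1)
            + (fun j : Fin (2*n+1) => if 3 ≤ v 1 ∧ (j:ℕ) = v 1 - 3 then (1:ℚ) else 0) := by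
          clear hC hP hroww hwi hvine hyk hk1 hk2
          funext j
          have hj : (j:ℕ) < 2*n+1 := j.isLt
          simp only [Row, exists_fin4, hv0, hv2, hv3, E, Pi.add_apply]
          split_ifs <;> (try norm_num) <;> (try (casesm* _ ∨ _)) <;> first | exact ‹False›.elim | omega
        have hD : (fun j : Fin (2*n+1) => if 3 ≤ v 1 ∧ (j:ℕ) = v 1 - 3 then (1:ℚ) else 0)
            ∈ Sp n v := by
          rcases hsf with h|h
          · have e : (fun j : Fin (2*n+1) => if 3 ≤ v 1 ∧ (j:ℕ) = v 1 - 3 then (1:ℚ) else 0)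
                = 0 := by
              funext j; rw [if_neg (by omega)]; rfl
            rw [e]; exact zero_mem _
          · have e : (fun j : Fin (2*n+1) => if 3 ≤ v 1 ∧ (j:ℕ) = v 1 - 3 then (1:ℚ) else 0)
                = E n (v 1 - 3) := by
              funext j; simp only [E]; split_ifs <;> (try rfl) <;> omega
            rw [e]; exact hC (v 1 - 3) (by omega)
        have hkey : E n (2*n) = Row n (y (2*n)) - Row n v
            + (fun j : Fin (2*n+1) => if 3 ≤ v 1 ∧ (j:ℕ) = v 1 - 3 then (1:ℚ) else 0) := by
          rw [hroww, hrowv]; abel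
        rw [hkey]
        exact add_mem (sub_mem (mem_yrow n v (2*n) (by omega) (by omega)) (mem_vrow n v)) hD
    · -- case B : the special coordinate is i = 3
      rcases hw with rfl|rfl
      · -- w = y (2n-1), with (2n-1) % 4 = 1
        have hwv : y (2*n-1) = ![0, 2*n+1, 2*n+2, 2*n+3] := by
          have e := y_mod1 (2*n-1) (by omega) (by omega)
          rwa [show 2*n-1+2 = 2*n+1 from by omega, show 2*n-1+3 = 2*n+2 from by omega,
            show 2*n-1+4 = 2*n+3 from by omega] at e
        rw [hwv] at hwi hvj
        have hi : i = 3 := by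
          fin_cases i
          · exact absurd (show (0:ℕ) = 2*n+3 from hwi) (by omega)
          · exact absurd (show 2*n+1 = 2*n+3 from hwi) (by omega)
          · exact absurd (show 2*n+2 = 2*n+3 from hwi) (by omega)
          · rfl
        subst hi
        have hv0 : v 0 = 0 := hvj 0 (by decide)
        have hv1 : v 1 = 2*n+1 := hvj 1 (by decide)
        have hv2 : v 2 = 2*n+2 := hvj 2 (by decide)
        have hsf := pos3_val n k (v 3) hn h4 hk1 hk2 hyk hvine
        have hroww : Row n (y (2*n-1)) = E n (2*n-2) + E n (2*n-1) + E n (2*n) := by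
          have e := row_mod1 n (2*n-1) (by omega) (by omega)
          rwa [show 2*n-1-1 = 2*n-2 from by omega, show 2*n-1+1 = 2*n from by omega] at e
        have hrowv : Row n v = E n (2*n-2) + E n (2*n-1)
            + (fun j : Fin (2*n+1) => if 3 ≤ v 3 ∧ (j:ℕ) = v 3 - 3 then (1:ℚ) else 0) := by
          clear hC hP hroww hwi hvine hyk hk1 hk2
          funext j
          have hj : (j:ℕ) < 2*n+1 := j.isLt
          simp only [Row, exists_fin4, hv0, hv1, hv2, E, Pi.add_apply]
          split_ifs <;> (try norm_num) <;> (try (casesm* _ ∨ _)) <;> first | exact ‹False›.elim | omega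
        have hD : (fun j : Fin (2*n+1) => if 3 ≤ v 3 ∧ (j:ℕ) = v 3 - 3 then (1:ℚ) else 0)
            ∈ Sp n v := by
          rcases hsf with h|h
          · have e : (fun j : Fin (2*n+1) => if 3 ≤ v 3 ∧ (j:ℕ) = v 3 - 3 then (1:ℚ) else 0)
                = E n 0 := by
              funext j; simp only [E]; split_ifs <;> (try rfl) <;> omega
            rw [e]; exact hC 0 (by omega)
          · have e : (fun j : Fin (2*n+1) => if 3 ≤ v 3 ∧ (j:ℕ) = v 3 - 3 then (1:ℚ) else 0)
                = E n (v 3 - 3) := by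
              funext j; simp only [E]; split_ifs <;> (try rfl) <;> omega
            rw [e]; exact hC (v 3 - 3) (by omega)
        have hkey : E n (2*n) = Row n (y (2*n-1)) - Row n v
            + (fun j : Fin (2*n+1) => if 3 ≤ v 3 ∧ (j:ℕ) = v 3 - 3 then (1:ℚ) else 0) := by
          rw [hroww, hrowv]; abel
        rw [hkey]
        exact add_mem (sub_mem (mem_yrow n v (2*n-1) (by omega) (by omega)) (mem_vrow n v)) hD
      · -- w = y (2n), with (2n) % 4 = 2
        have hwv : y (2*n) = ![2*n, 1, 2*n+2, 2*n+3] := y_mod2 (2*n) (by omega) h4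
        rw [hwv] at hwi hvj
        have hi : i = 3 := by
          fin_cases i
          · exact absurd (show 2*n = 2*n+3 from hwi) (by omega)
          · exact absurd (show (1:ℕ) = 2*n+3 from hwi) (by omega)
          · exact absurd (show 2*n+2 = 2*n+3 from hwi) (by omega)
          · rfl
        subst hi
        have hv0 : v 0 = 2*n := hvj 0 (by decide)
        have hv1 : v 1 = 1 := hvj 1 (by decide)
        have hv2 : v 2 = 2*n+2 := hvj 2 (by decide)
        have hsf := pos3_val n k (v 3) hn h4 hk1 hk2 hyk hvine
        have hroww : Row n (y (2*n)) = E n (2*n-3) + E n (2*n-1) + E n (2*n) := by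
          exact row_mod2 n (2*n) (by omega) h4
        have hrowv : Row n v = E n (2*n-3) + E n (2*n-1)
            + (fun j : Fin (2*n+1) => if 3 ≤ v 3 ∧ (j:ℕ) = v 3 - 3 then (1:ℚ) else 0) := by
          clear hC hP hroww hwi hvine hyk hk1 hk2
          funext j
          have hj : (j:ℕ) < 2*n+1 := j.isLt
          simp only [Row, exists_fin4, hv0, hv1, hv2, E, Pi.add_apply]
          split_ifs <;> (try norm_num) <;> (try (casesm* _ ∨ _)) <;> first | exact ‹False›.elim | omega
        have hD : (fun j : Fin (2*n+1) => if 3 ≤ v 3 ∧ (j:ℕ) = v 3 - 3 then (1:ℚ) else 0)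
            ∈ Sp n v := by
          rcases hsf with h|h
          · have e : (fun j : Fin (2*n+1) => if 3 ≤ v 3 ∧ (j:ℕ) = v 3 - 3 then (1:ℚ) else 0)
                = E n 0 := by
              funext j; simp only [E]; split_ifs <;> (try rfl) <;> omega
            rw [e]; exact hC 0 (by omega)
          · have e : (fun j : Fin (2*n+1) => if 3 ≤ v 3 ∧ (j:ℕ) = v 3 - 3 then (1:ℚ) else 0)
                = E n (v 3 - 3) := by
              funext j; simp only [E]; split_ifs <;> (try rfl) <;> omega
            rw [e]; exact hC (v 3 - 3) (by omega)
        have hkey : E n (2*n) = Row n (y (2*n)) - Row n v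
            + (fun j : Fin (2*n+1) => if 3 ≤ v 3 ∧ (j:ℕ) = v 3 - 3 then (1:ℚ) else 0) := by
          rw [hroww, hrowv]; abel
        rw [hkey]
        exact add_mem (sub_mem (mem_yrow n v (2*n) (by omega) (by omega)) (mem_vrow n v)) hD
  have hE2n1 : E n (2*n-1) ∈ Sp n v := by
    have e : E n (2*n-1) = (E n (2*n-1) + E n (2*n)) - E n (2*n) := by abel
    rw [e]; exact sub_mem hP hE2n
  intro x _
  rw [pi_eq_sum_univ x]
  refine Submodule.sum_mem _ fun j _ => Submodule.smul_mem _ _ ?_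
  have e : (fun j' : Fin (2*n+1) => if (j:Fin (2*n+1)) = j' then (1:ℚ) else 0) = E n (j:ℕ) := by
    funext j'
    simp only [E, Fin.ext_iff, eq_comm]
  rw [e]
  have hj : (j:ℕ) < 2*n+1 := j.isLt
  rcases (by omega : (j:ℕ) ≤ 2*n-2 ∨ (j:ℕ) = 2*n-1 ∨ (j:ℕ) = 2*n) with h|h|h
  · exact hC _ h
  · rw [h]; exact hE2n1
  · rw [h]; exact hE2n

lemma fin4_cases (P : Fin 4 → Prop) (h0 : P 0) (h1 : P 1) (h2 : P 2) (h3 : P 3) : ∀ t, P t := by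
  intro t; fin_cases t <;> assumption

lemma inj_of_vals (p : Fin 4 → ℕ) (a b c d : ℕ)
    (h0 : p 0 = a) (h1 : p 1 = b) (h2 : p 2 = c) (h3 : p 3 = d)
    (hab : a ≠ b) (hac : a ≠ c) (had : a ≠ d) (hbc : b ≠ c) (hbd : b ≠ d) (hcd : c ≠ d) :
    ∀ t t', p t = p t' → t = t' := by
  refine fin4_cases _ ?_ ?_ ?_ ?_ <;> refine fin4_cases _ ?_ ?_ ?_ ?_ <;> intro h <;>
    first | rfl | (exfalso; omega)

lemma bound_of_vals (p : Fin 4 → ℕ) (a b c d N : ℕ)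
    (h0 : p 0 = a) (h1 : p 1 = b) (h2 : p 2 = c) (h3 : p 3 = d)
    (ha : a < N) (hb : b < N) (hc : c < N) (hd : d < N) :
    ∀ t, p t < N := by
  refine fin4_cases _ ?_ ?_ ?_ ?_ <;> omega

lemma y_inj_bound (n k : ℕ) (hn : 2 ≤ n) (h1 : 1 ≤ k) (h2 : k ≤ 2*n) :
    (∀ t t', y k t = y k t' → t = t') ∧ (∀ t, y k t < 2*n+4) := by
  rcases eq_or_ne k 1 with rfl|hk1'
  · have hy := y_one
    have e0 : y 1 0 = 0 := by rw [hy]; rfl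
    have e1 : y 1 1 = 1 := by rw [hy]; rfl
    have e2 : y 1 2 = 2 := by rw [hy]; rfl
    have e3 : y 1 3 = 3 := by rw [hy]; rfl
    exact ⟨inj_of_vals _ _ _ _ _ e0 e1 e2 e3 (by omega) (by omega) (by omega) (by omega)
        (by omega) (by omega),
      bound_of_vals _ _ _ _ _ _ e0 e1 e2 e3 (by omega) (by omega) (by omega) (by omega)⟩
  rcases eq_or_ne k 2 with rfl|hk2'
  · have hy := y_two
    have e0 : y 2 0 = 0 := by rw [hy]; rfl
    have e1 : y 2 1 = 1 := by rw [hy]; rfl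
    have e2 : y 2 2 = 4 := by rw [hy]; rfl
    have e3 : y 2 3 = 5 := by rw [hy]; rfl
    exact ⟨inj_of_vals _ _ _ _ _ e0 e1 e2 e3 (by omega) (by omega) (by omega) (by omega)
        (by omega) (by omega),
      bound_of_vals _ _ _ _ _ _ e0 e1 e2 e3 (by omega) (by omega) (by omega) (by omega)⟩
  have h3k : 3 ≤ k := by omega
  rcases (by omega : k % 4 = 1 ∨ k % 4 = 2 ∨ k % 4 = 3 ∨ k % 4 = 0) with hm|hm|hm|hm
  · have hy := y_mod1 k h3k hm
    have e0 : y k 0 = 0 := by rw [hy]; rfl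
    have e1 : y k 1 = k+2 := by rw [hy]; rfl
    have e2 : y k 2 = k+3 := by rw [hy]; rfl
    have e3 : y k 3 = k+4 := by rw [hy]; rfl
    exact ⟨inj_of_vals _ _ _ _ _ e0 e1 e2 e3 (by omega) (by omega) (by omega) (by omega)
        (by omega) (by omega),
      bound_of_vals _ _ _ _ _ _ e0 e1 e2 e3 (by omega) (by omega) (by omega) (by omega)⟩
  · have hy := y_mod2 k h3k hm
    have e0 : y k 0 = k := by rw [hy]; rfl
    have e1 : y k 1 = 1 := by rw [hy]; rfl
    have e2 : y k 2 = k+2 := by rw [hy]; rfl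
    have e3 : y k 3 = k+3 := by rw [hy]; rfl
    exact ⟨inj_of_vals _ _ _ _ _ e0 e1 e2 e3 (by omega) (by omega) (by omega) (by omega)
        (by omega) (by omega),
      bound_of_vals _ _ _ _ _ _ e0 e1 e2 e3 (by omega) (by omega) (by omega) (by omega)⟩
  · have hy := y_mod3 k h3k hm
    have e0 : y k 0 = k+3 := by rw [hy]; rfl
    have e1 : y k 1 = k+4 := by rw [hy]; rfl
    have e2 : y k 2 = 2 := by rw [hy]; rfl
    have e3 : y k 3 = k+2 := by rw [hy]; rfl
    exact ⟨inj_of_vals _ _ _ _ _ e0 e1 e2 e3 (by omega) (by omega) (by omega) (by omega)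
        (by omega) (by omega),
      bound_of_vals _ _ _ _ _ _ e0 e1 e2 e3 (by omega) (by omega) (by omega) (by omega)⟩
  · have hy := y_mod0 k h3k hm
    have e0 : y k 0 = k+2 := by rw [hy]; rfl
    have e1 : y k 1 = k+3 := by rw [hy]; rfl
    have e2 : y k 2 = k := by rw [hy]; rfl
    have e3 : y k 3 = 3 := by rw [hy]; rfl
    exact ⟨inj_of_vals _ _ _ _ _ e0 e1 e2 e3 (by omega) (by omega) (by omega) (by omega)
        (by omega) (by omega),
      bound_of_vals _ _ _ _ _ _ e0 e1 e2 e3 (by omega) (by omega) (by omega) (by omega)⟩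

lemma v_inj_bound (n : ℕ) (hn : 2 ≤ n) (w : Fin 4 → ℕ)
    (hw : w = y (2 * n - 1) ∨ w = y (2 * n)) (v : Fin 4 → ℕ)
    (hv : ∃ i : Fin 4, w i = α (2 * n) ∧ v i ≠ α (2 * n) ∧
      (∃ k, 1 ≤ k ∧ k ≤ 2 * n ∧ y k i = v i) ∧ ∀ j, j ≠ i → v j = w j) :
    (∀ t t', v t = v t' → t = t') ∧ (∀ t, v t < 2*n+4) := by
  obtain ⟨i, hwi, hvine, ⟨k, hk1, hk2, hyk⟩, hvj⟩ := hv
  unfold α at hwi hvine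
  rcases (by omega : (2*n) % 4 = 0 ∨ (2*n) % 4 = 2) with h4|h4
  · rcases hw with rfl|rfl
    · have hwv : y (2*n-1) = ![2*n+2, 2*n+3, 2, 2*n+1] := by
        have e := y_mod3 (2*n-1) (by omega) (by omega)
        rwa [show 2*n-1+3 = 2*n+2 from by omega, show 2*n-1+4 = 2*n+3 from by omega,
          show 2*n-1+2 = 2*n+1 from by omega] at e
      rw [hwv] at hwi hvj
      have hi : i = 1 := by
        fin_cases i
        · exact absurd (show 2*n+2 = 2*n+3 from hwi) (by omega)
        · rfl
        · exact absurd (show (2:ℕ) = 2*n+3 from hwi) (by omega)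
        · exact absurd (show 2*n+1 = 2*n+3 from hwi) (by omega)
      subst hi
      have hv0 : v 0 = 2*n+2 := hvj 0 (by decide)
      have hv2 : v 2 = 2 := hvj 2 (by decide)
      have hv3 : v 3 = 2*n+1 := hvj 3 (by decide)
      have hsf := pos1_val n k (v 1) hn h4 hk1 hk2 hyk hvine
      exact ⟨inj_of_vals _ _ _ _ _ hv0 rfl hv2 hv3 (by omega) (by omega) (by omega) (by omega)
          (by omega) (by omega),
        bound_of_vals _ _ _ _ _ _ hv0 rfl hv2 hv3 (by omega) (by omega) (by omega) (by omega)⟩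
    · have hwv : y (2*n) = ![2*n+2, 2*n+3, 2*n, 3] := y_mod0 (2*n) (by omega) h4
      rw [hwv] at hwi hvj
      have hi : i = 1 := by
        fin_cases i
        · exact absurd (show 2*n+2 = 2*n+3 from hwi) (by omega)
        · rfl
        · exact absurd (show 2*n = 2*n+3 from hwi) (by omega)
        · exact absurd (show (3:ℕ) = 2*n+3 from hwi) (by omega)
      subst hi
      have hv0 : v 0 = 2*n+2 := hvj 0 (by decide)
      have hv2 : v 2 = 2*n := hvj 2 (by decide)
      have hv3 : v 3 = 3 := hvj 3 (by decide)
      have hsf := pos1_val n k (v 1) hn h4 hk1 hk2 hyk hvine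
      exact ⟨inj_of_vals _ _ _ _ _ hv0 rfl hv2 hv3 (by omega) (by omega) (by omega) (by omega)
          (by omega) (by omega),
        bound_of_vals _ _ _ _ _ _ hv0 rfl hv2 hv3 (by omega) (by omega) (by omega) (by omega)⟩
  · rcases hw with rfl|rfl
    · have hwv : y (2*n-1) = ![0, 2*n+1, 2*n+2, 2*n+3] := by
        have e := y_mod1 (2*n-1) (by omega) (by omega)
        rwa [show 2*n-1+2 = 2*n+1 from by omega, show 2*n-1+3 = 2*n+2 from by omega,
          show 2*n-1+4 = 2*n+3 from by omega] at e
      rw [hwv] at hwi hvj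
      have hi : i = 3 := by
        fin_cases i
        · exact absurd (show (0:ℕ) = 2*n+3 from hwi) (by omega)
        · exact absurd (show 2*n+1 = 2*n+3 from hwi) (by omega)
        · exact absurd (show 2*n+2 = 2*n+3 from hwi) (by omega)
        · rfl
      subst hi
      have hv0 : v 0 = 0 := hvj 0 (by decide)
      have hv1 : v 1 = 2*n+1 := hvj 1 (by decide)
      have hv2 : v 2 = 2*n+2 := hvj 2 (by decide)
      have hsf := pos3_val n k (v 3) hn h4 hk1 hk2 hyk hvine
      exact ⟨inj_of_vals _ _ _ _ _ hv0 hv1 hv2 rfl (by omega) (by omega) (by omega) (by omega)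
          (by omega) (by omega),
        bound_of_vals _ _ _ _ _ _ hv0 hv1 hv2 rfl (by omega) (by omega) (by omega) (by omega)⟩
    · have hwv : y (2*n) = ![2*n, 1, 2*n+2, 2*n+3] := y_mod2 (2*n) (by omega) h4
      rw [hwv] at hwi hvj
      have hi : i = 3 := by
        fin_cases i
        · exact absurd (show 2*n = 2*n+3 from hwi) (by omega)
        · exact absurd (show (1:ℕ) = 2*n+3 from hwi) (by omega)
        · exact absurd (show 2*n+2 = 2*n+3 from hwi) (by omega)
        · rfl
      subst hi
      have hv0 : v 0 = 2*n := hvj 0 (by decide)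
      have hv1 : v 1 = 1 := hvj 1 (by decide)
      have hv2 : v 2 = 2*n+2 := hvj 2 (by decide)
      have hsf := pos3_val n k (v 3) hn h4 hk1 hk2 hyk hvine
      exact ⟨inj_of_vals _ _ _ _ _ hv0 hv1 hv2 rfl (by omega) (by omega) (by omega) (by omega)
          (by omega) (by omega),
        bound_of_vals _ _ _ _ _ _ hv0 hv1 hv2 rfl (by omega) (by omega) (by omega) (by omega)⟩

lemma bridge (n : ℕ) (p : Fin 4 → ℕ) (hinj : ∀ t t' : Fin 4, p t = p t' → t = t')
    (hb : ∀ t, p t < 2*n+4) (U : Fin (2*n+1) → ℂ) :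
    (∑ t : Fin 4, (if h : 3 ≤ p t ∧ p t < 2*n+4 then U ⟨p t - 3, by omega⟩ else 0))
      = ∑ j : Fin (2*n+1), (if ∃ t, p t = (j:ℕ)+3 then (1:ℂ) else 0) * U j := by
  set g : Fin 4 → Fin (2*n+1) := fun t => ⟨p t - 3, by have := hb t; omega⟩ with hg
  have key : ∀ t : Fin 4, (if h : 3 ≤ p t ∧ p t < 2*n+4 then U ⟨p t - 3, by omega⟩ else 0)
      = if 3 ≤ p t then U (g t) else 0 := by
    intro t
    by_cases h3 : 3 ≤ p t
    · rw [dif_pos ⟨h3, hb t⟩, if_pos h3]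
    · rw [dif_neg (by tauto), if_neg h3]
  rw [Finset.sum_congr rfl (fun t _ => key t)]
  have himg : (Finset.univ.filter (fun t => 3 ≤ p t)).image g
      = Finset.univ.filter (fun j : Fin (2*n+1) => ∃ t, p t = (j:ℕ)+3) := by
    ext j
    simp only [Finset.mem_image, Finset.mem_filter, Finset.mem_univ, true_and]
    constructor
    · rintro ⟨t, h3, rfl⟩
      exact ⟨t, by simp only [hg]; omega⟩
    · rintro ⟨t, ht⟩
      refine ⟨t, by omega, ?_⟩
      apply Fin.ext
      simp only [hg]
      omega
  have hinj' : ∀ t ∈ Finset.univ.filter (fun t => 3 ≤ p t),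
      ∀ t' ∈ Finset.univ.filter (fun t => 3 ≤ p t), g t = g t' → t = t' := by
    intro t ht t' ht' hgt
    simp only [Finset.mem_filter, Finset.mem_univ, true_and] at ht ht'
    have := Fin.mk.injEq .. ▸ hgt
    apply hinj
    have hval : p t - 3 = p t' - 3 := congrArg Fin.val hgt
    omega
  calc ∑ t : Fin 4, (if 3 ≤ p t then U (g t) else 0)
      = ∑ t ∈ Finset.univ.filter (fun t => 3 ≤ p t), U (g t) :=
        (Finset.sum_filter _ _).symm
    _ = ∑ j ∈ (Finset.univ.filter (fun t => 3 ≤ p t)).image g, U j :=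
        (Finset.sum_image hinj').symm
    _ = ∑ j ∈ Finset.univ.filter (fun j : Fin (2*n+1) => ∃ t, p t = (j:ℕ)+3), U j := by
        rw [himg]
    _ = ∑ j : Fin (2*n+1), (if ∃ t, p t = (j:ℕ)+3 then (1:ℂ) else 0) * U j := by
        rw [Finset.sum_filter]
        refine Finset.sum_congr rfl fun j _ => ?_
        split_ifs <;> simp

/-- for n ≥ 2, replacing in y_{2n} (or y_{2n−1}) the coordinate
equal to α_{2n} by another symbol occurring in the same coordinate position among
y₁,…,y_{2n} yields a point v such that S_{2n} ∪ {v} is good; equivalently the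
(2n+1)×(2n+1) matrix with rows y₁,…,y_{2n},v and columns x₄,α₁,…,α_{2n}
(column j carries symbol j+3) has its first 2n rows linearly independent and its
last row outside their span. -/
theorem stmt_18 (n : ℕ) (hn : 2 ≤ n) (w : Fin 4 → ℕ)
    (hw : w = y (2 * n - 1) ∨ w = y (2 * n)) (v : Fin 4 → ℕ)
    (hv : ∃ i : Fin 4, w i = α (2 * n) ∧ v i ≠ α (2 * n) ∧
      (∃ k, 1 ≤ k ∧ k ≤ 2 * n ∧ y k i = v i) ∧ ∀ j, j ≠ i → v j = w j) :
    IsGood (Sn (2 * n) ∪ {v}) ∧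
    LinearIndependent ℚ (fun k : Fin (2 * n) => fun j : Fin (2 * n + 1) =>
      if ∃ t, y ((k : ℕ) + 1) t = (j : ℕ) + 3 then (1 : ℚ) else 0) ∧
    (fun j : Fin (2 * n + 1) => if ∃ t, v t = (j : ℕ) + 3 then (1 : ℚ) else 0) ∉
      Submodule.span ℚ (Set.range (fun k : Fin (2 * n) => fun j : Fin (2 * n + 1) =>
        if ∃ t, y ((k : ℕ) + 1) t = (j : ℕ) + 3 then (1 : ℚ) else 0)) := by
  have hLI : LinearIndependent ℚ (Ffam n v) :=
    linearIndependent_of_top_le_span_of_card_eq_finrank (sp_top n hn w hw v hv)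
      (by simp [Module.finrank_fin_fun])
  have hLI' := hLI
  unfold Ffam at hLI'
  rw [linearIndependent_fin_snoc] at hLI'
  obtain ⟨hG, hnot⟩ := hLI'
  refine ⟨?_, hG, hnot⟩
  -- IsGood
  intro f
  have hQ : IsUnit (Matrix.of (Ffam n v) : Matrix (Fin (2*n+1)) (Fin (2*n+1)) ℚ) := by
    rw [← Matrix.linearIndependent_rows_iff_isUnit]
    exact hLI
  set M : Matrix (Fin (2*n+1)) (Fin (2*n+1)) ℂ :=
    Matrix.of fun r j => ((Ffam n v r j : ℚ) : ℂ) with hMdef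
  have hM : IsUnit M := by
    have h1 := IsUnit.map ((Rat.castHom ℂ).mapMatrix) hQ
    rw [RingHom.mapMatrix_apply] at h1
    exact h1
  have hdet : IsUnit M.det := (Matrix.isUnit_iff_isUnit_det M).mp hM
  set P : Fin (2*n+1) → (Fin 4 → ℕ) := Fin.snoc (fun k : Fin (2*n) => y ((k:ℕ)+1)) v with hP
  set b : Fin (2*n+1) → ℂ := fun r => f (P r) with hb
  set U := M⁻¹.mulVec b with hUdef
  have hMU : M.mulVec U = b := by
    rw [hUdef, Matrix.mulVec_mulVec, Matrix.mul_nonsing_inv _ hdet, Matrix.one_mulVec]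
  refine ⟨fun _ s => if h : 3 ≤ s ∧ s < 2*n+4 then U ⟨s-3, by omega⟩ else 0, ?_⟩
  have hrow : ∀ r : Fin (2*n+1),
      M r = fun j : Fin (2*n+1) => if ∃ t, P r t = (j:ℕ)+3 then (1:ℂ) else 0 := by
    intro r
    have hFr : Ffam n v r = Row n (P r) := by
      rw [hP]
      unfold Ffam
      induction r using Fin.lastCases with
      | last =>
        rw [Fin.snoc_last, Fin.snoc_last]
      | cast q =>
        rw [Fin.snoc_castSucc, Fin.snoc_castSucc]
        rfl
    funext j
    show ((Ffam n v r j : ℚ) : ℂ) = _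
    rw [hFr]
    simp only [Row]
    split_ifs <;> norm_num
  have main : ∀ r : Fin (2*n+1),
      (∀ t t', P r t = P r t' → t = t') → (∀ t, P r t < 2*n+4) →
      f (P r) = ∑ i : Fin 4,
        (if h : 3 ≤ P r i ∧ P r i < 2*n+4 then U ⟨P r i - 3, by omega⟩ else 0) := by
    intro r hi hbd
    have h1 : f (P r) = (M.mulVec U) r := by rw [hMU]
    have h2 : (M.mulVec U) r
        = ∑ j : Fin (2*n+1), (if ∃ t, P r t = (j:ℕ)+3 then (1:ℂ) else 0) * U j := by
      simp only [Matrix.mulVec, dotProduct, hrow r]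
    rw [h1, h2, ← bridge n (P r) hi hbd U]
  intro p hp
  rcases hp with hp | hp
  · obtain ⟨k, hk, rfl⟩ := hp
    obtain ⟨hk1, hk2⟩ := hk
    have hPr : P (Fin.castSucc ⟨k-1, by omega⟩) = y k := by
      rw [hP, Fin.snoc_castSucc]
      show y ((k-1)+1) = y k
      rw [show k-1+1 = k from by omega]
    have hprop := y_inj_bound n k hn hk1 hk2
    have hmain := main (Fin.castSucc ⟨k-1, by omega⟩)
      (by rw [hPr]; exact hprop.1) (by rw [hPr]; exact hprop.2)
    simp only [hPr] at hmain
    exact hmain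
  · rw [Set.mem_singleton_iff] at hp
    rw [hp]
    have hPr : P (Fin.last (2*n)) = v := by rw [hP, Fin.snoc_last]
    have hprop := v_inj_bound n hn w hw v hv
    have hmain := main (Fin.last (2*n))
      (by rw [hPr]; exact hprop.1) (by rw [hPr]; exact hprop.2)
    simp only [hPr] at hmain
    exact hmain
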